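/- arXiv:1808.01810 — 3 statements merged into one kernel-verified Lean document; each statement's English description precedes it below -/
import Mathlib

section
/- For positive semidefinite matrices, if Q ⪯ P·I for each k and n_r = total dimension, then log det(I + Σ_k H_k^H (P/n_r) H_k) ≥ log det(I + Σ_k P H_k^H H_k) − n_t · log(n_r), where H_k are n_{r,k} × n_t complex matrices and P > 0. -/
open Matrix BigOperators ComplexOrder

lemma det_re_add_smul_one {n : ℕ} {B : Matrix (Fin n) (Fin n) ℂ} (hB : B.PosSemidef)
    {c : ℝ} (hc : 0 ≤ c) : B.det.re ≤ (B + (c : ℂ) • 1).det.re := by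
  classical
  have hH := hB.1
  set U : Matrix (Fin n) (Fin n) ℂ := (hH.eigenvectorUnitary : Matrix (Fin n) (Fin n) ℂ)
  have hU1 : U * star U = 1 := (Matrix.mem_unitaryGroup_iff).mp hH.eigenvectorUnitary.2
  have hU2 : star U * U = 1 := (Matrix.mem_unitaryGroup_iff').mp hH.eigenvectorUnitary.2
  have hspec : B = U * diagonal (Complex.ofReal ∘ hH.eigenvalues) * star U :=
    hH.spectral_theorem
  have hsum : B + (c : ℂ) • 1 = U * (diagonal (Complex.ofReal ∘ fun i => hH.eigenvalues i + c)) * star U := by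
    have h1 : (c : ℂ) • (1 : Matrix (Fin n) (Fin n) ℂ) = U * ((c : ℂ) • 1) * star U := by
      rw [mul_smul_comm, mul_one, smul_mul_assoc, hU1]
    calc B + (c : ℂ) • 1
        = U * diagonal (Complex.ofReal ∘ hH.eigenvalues) * star U + U * ((c : ℂ) • 1) * star U := by
          rw [← hspec, ← h1]
      _ = U * (diagonal (Complex.ofReal ∘ hH.eigenvalues) + (c : ℂ) • 1) * star U := by
          rw [← add_mul, ← mul_add]
      _ = U * (diagonal (Complex.ofReal ∘ fun i => hH.eigenvalues i + c)) * star U := by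
          congr 1
          congr 1
          rw [smul_eq_diagonal_mul, mul_one, diagonal_add]
          simp [diagonal, Function.comp]
  have hdetU : det U * det (star U) = 1 := by
    rw [← det_mul, hU1, det_one]
  have detB : B.det = ∏ i, ((hH.eigenvalues i : ℂ)) := hH.det_eq_prod_eigenvalues
  have detBC : (B + (c : ℂ) • 1).det = ∏ i, ((hH.eigenvalues i + c : ℝ) : ℂ) := by
    rw [hsum, det_mul, det_mul, mul_comm, ← mul_assoc, mul_comm (det (star U)), hdetU, one_mul,
      det_diagonal]
    rfl
  have h1 : B.det.re = ∏ i, hH.eigenvalues i := by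
    rw [detB, ← Complex.ofReal_prod, Complex.ofReal_re]
  have h2 : (B + (c : ℂ) • 1).det.re = ∏ i, (hH.eigenvalues i + c) := by
    rw [detBC, ← Complex.ofReal_prod, Complex.ofReal_re]
  rw [h1, h2]
  exact Finset.prod_le_prod (fun i _ => hB.eigenvalues_nonneg i)
    (fun i _ => le_add_of_nonneg_right hc)

/-- Power scaling loses at most `n_t * log n_r` bits in the log-det capacity. -/
theorem stmt_0 (K nt : ℕ) (nrk : Fin K → ℕ)
    (H : ∀ k : Fin K, Matrix (Fin (nrk k)) (Fin nt) ℂ)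
    (Q : ∀ k : Fin K, Matrix (Fin nt) (Fin nt) ℂ)
    (P : ℝ) (hP : 0 < P)
    (hQ : ∀ k : Fin K, (((P : ℂ) • (1 : Matrix (Fin nt) (Fin nt) ℂ)) - Q k).PosSemidef)
    (nr : ℕ) (hnr : nr = ∑ k : Fin K, nrk k) (hnrpos : 0 < nr) :
    Real.logb 2 ((1 + ∑ k : Fin K, ((P / nr : ℝ) : ℂ) • ((H k)ᴴ * H k)).det.re)
      ≥ Real.logb 2 ((1 + ∑ k : Fin K, (P : ℂ) • ((H k)ᴴ * H k)).det.re)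
        - (nt : ℝ) * Real.logb 2 (nr : ℝ) := by
  classical
  have hnr1 : (1 : ℝ) ≤ (nr : ℝ) := by exact_mod_cast hnrpos
  have hnrne : (nr : ℝ) ≠ 0 := by positivity
  -- PSD of scaled sums
  have hsmul : ∀ (c : ℝ), 0 ≤ c → ∀ k : Fin K,
      ((c : ℂ) • ((H k)ᴴ * H k)).PosSemidef := by
    intro c hc k
    have key : (c : ℂ) • ((H k)ᴴ * H k)
        = ((Real.sqrt c : ℂ) • H k)ᴴ * ((Real.sqrt c : ℂ) • H k) := by
      rw [conjTranspose_smul, Matrix.smul_mul, Matrix.mul_smul, smul_smul]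
      congr 1
      rw [Complex.star_def, Complex.conj_ofReal, ← Complex.ofReal_mul,
        Real.mul_self_sqrt hc]
    rw [key]
    exact posSemidef_conjTranspose_mul_self _
  have hsum : ∀ (c : ℝ), 0 ≤ c →
      (∑ k : Fin K, (c : ℂ) • ((H k)ᴴ * H k)).PosSemidef := by
    intro c hc
    refine Finset.sum_induction _ _ (fun a b ha hb => ha.add hb) ?_
      (fun k _ => hsmul c hc k)
    simpa using (Matrix.PosSemidef.zero (n := Fin nt) (R := ℂ))
  have hPnr : (0:ℝ) ≤ P / nr := by positivity
  set A : Matrix (Fin nt) (Fin nt) ℂ := 1 + ∑ k : Fin K, ((P / nr : ℝ) : ℂ) • ((H k)ᴴ * H k) with hA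
  set B : Matrix (Fin nt) (Fin nt) ℂ := 1 + ∑ k : Fin K, (P : ℂ) • ((H k)ᴴ * H k) with hB
  have hApd : A.PosDef := Matrix.PosDef.one.add_posSemidef (hsum _ hPnr)
  have hBpsd : B.PosSemidef := (Matrix.PosDef.one.add_posSemidef (hsum P hP.le)).posSemidef
  have hBpd : B.PosDef := Matrix.PosDef.one.add_posSemidef (hsum P hP.le)
  have hAre : 0 < A.det.re := (Complex.lt_def.mp hApd.det_pos).1
  have hBre : 0 < B.det.re := (Complex.lt_def.mp hBpd.det_pos).1
  -- key identity : (nr:ℂ) • A = B + (nr - 1 : ℝ) • 1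
  have hkey : ((nr : ℝ) : ℂ) • A = B + (((nr : ℝ) - 1 : ℝ) : ℂ) • 1 := by
    rw [hA, hB, smul_add, Finset.smul_sum]
    have h1 : ∀ k : Fin K, ((nr : ℝ) : ℂ) • (((P / nr : ℝ) : ℂ) • ((H k)ᴴ * H k))
        = (P : ℂ) • ((H k)ᴴ * H k) := by
      intro k
      rw [smul_smul, ← Complex.ofReal_mul, mul_div_cancel₀ _ hnrne]
    rw [Finset.sum_congr rfl (fun k _ => h1 k)]
    have h2 : ((nr : ℝ) : ℂ) • (1 : Matrix (Fin nt) (Fin nt) ℂ)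
        = 1 + (((nr : ℝ) - 1 : ℝ) : ℂ) • 1 := by
      rw [Complex.ofReal_sub, sub_smul, Complex.ofReal_one, one_smul]
      abel
    rw [h2]
    abel
  -- determinant comparison
  have hdet : B.det.re ≤ ((nr : ℝ)) ^ nt * A.det.re := by
    have h1 : B.det.re ≤ (B + (((nr : ℝ) - 1 : ℝ) : ℂ) • 1).det.re :=
      det_re_add_smul_one hBpsd (by linarith)
    have h2 : (B + (((nr : ℝ) - 1 : ℝ) : ℂ) • 1).det = ((nr : ℝ) : ℂ) ^ nt * A.det := by
      rw [← hkey, det_smul]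
      simp
    rw [h2] at h1
    have h3 : (((nr : ℝ) : ℂ) ^ nt * A.det).re = ((nr : ℝ)) ^ nt * A.det.re := by
      rw [← Complex.ofReal_pow, Complex.re_ofReal_mul]
    rwa [h3] at h1
  -- logs
  rw [ge_iff_le, sub_le_iff_le_add]
  have hlog : Real.logb 2 (B.det.re) ≤ Real.logb 2 (((nr : ℝ)) ^ nt * A.det.re) :=
    Real.logb_le_logb_of_le (by norm_num) hBre hdet
  calc Real.logb 2 (B.det.re)
      ≤ Real.logb 2 (((nr : ℝ)) ^ nt * A.det.re) := hlog
    _ = (nt : ℝ) * Real.logb 2 (nr : ℝ) + Real.logb 2 (A.det.re) := by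
        rw [Real.logb_mul (by positivity) (ne_of_gt hAre), Real.logb_pow]
    _ = Real.logb 2 (A.det.re) + (nt : ℝ) * Real.logb 2 (nr : ℝ) := by ring
end

section
/- Let f, g ∈ ℂ, and let Q be a 2×2 Hermitian positive semidefinite matrix with eigen-decomposition Q = U diag(λ, μ) U^H where U = [[u, v],[ṽ, ũ]] is unitary with |u|² = |ũ|² = 1 − |v|² = 1 − |ṽ|², and λ ≥ μ ≥ 0. Let h₂ = [f, g] (a row vector). Then Q(1,1)/(1 + h₂ Q h₂^H) ≤ 2·min{ 2/|f|² + 2(|g|²/|f|²)·λ, λ }. -/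
open Matrix ComplexOrder

lemma sq_abs_le_aux (x y : ℂ) :
    ‖x‖ ^ 2 ≤ 2 * ‖x + y‖ ^ 2 + 2 * ‖y‖ ^ 2 := by
  have hx : x = (x + y) + (-y) := by ring
  have h : ‖x‖ ≤ ‖x + y‖ + ‖y‖ := by
    calc ‖x‖ = ‖(x + y) + (-y)‖ := by rw [← hx]
    _ ≤ ‖x + y‖ + ‖-y‖ := norm_add_le _ _
    _ = ‖x + y‖ + ‖y‖ := by rw [norm_neg]
  have h2 : ‖x‖ ^ 2 ≤ (‖x + y‖ + ‖y‖) ^ 2 :=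
    pow_le_pow_left₀ (norm_nonneg x) h 2
  nlinarith [h2, sq_nonneg (‖x + y‖ - ‖y‖)]

set_option maxHeartbeats 1000000 in
/-- Upper bound on `Q(1,1) / (1 + h₂ Q h₂ᴴ)` for a 2×2 PSD matrix with
eigen-decomposition `Q = U diag(λ, μ) Uᴴ` (Lemma 3, first part). -/
theorem stmt_2 (f g u v vt ut : ℂ) (lam mu : ℝ)
    (hf : f ≠ 0)
    (hlm : lam ≥ mu) (hmu : mu ≥ 0)
    (U : Matrix (Fin 2) (Fin 2) ℂ) (hUdef : U = !![u, v; vt, ut])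
    (hU : Uᴴ * U = 1)
    (huut : ‖u‖ ^ 2 = ‖ut‖ ^ 2)
    (huv : ‖u‖ ^ 2 = 1 - ‖vt‖ ^ 2)
    (huv' : ‖u‖ ^ 2 = 1 - ‖v‖ ^ 2)
    (Q : Matrix (Fin 2) (Fin 2) ℂ)
    (hQ : Q = U * Matrix.diagonal (fun i => ((![lam, mu] i : ℝ) : ℂ)) * Uᴴ)
    (h₂ : Fin 2 → ℂ) (hh₂ : h₂ = ![f, g]) :
    (Q 0 0).re / (1 + ((Matrix.vecMul h₂ Q) ⬝ᵥ fun i => starRingEnd ℂ (h₂ i)).re)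
      ≤ 2 * min (2 / ‖f‖ ^ 2 + 2 * (‖g‖ ^ 2 / ‖f‖ ^ 2) * lam) lam := by
  subst hUdef hh₂ hQ
  set F := ‖f‖ ^ 2 with hF
  set G := ‖g‖ ^ 2 with hG
  set A := ‖u‖ ^ 2 with hA
  set B := ‖v‖ ^ 2 with hB
  set Bt := ‖vt‖ ^ 2 with hBt
  set At := ‖ut‖ ^ 2 with hAt
  set P := ‖f * u + g * vt‖ ^ 2 with hP
  set R := ‖f * v + g * ut‖ ^ 2 with hR
  have hf2 : (0 : ℝ) < F := by rw [hF]; exact pow_pos (norm_pos_iff.mpr hf) 2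
  have hA0 : (0 : ℝ) ≤ A := by rw [hA]; positivity
  have hB0 : (0 : ℝ) ≤ B := by rw [hB]; positivity
  have hBt0 : (0 : ℝ) ≤ Bt := by rw [hBt]; positivity
  have hAt0 : (0 : ℝ) ≤ At := by rw [hAt]; positivity
  have hG0 : (0 : ℝ) ≤ G := by rw [hG]; positivity
  have hP0 : (0 : ℝ) ≤ P := by rw [hP]; positivity
  have hR0 : (0 : ℝ) ≤ R := by rw [hR]; positivity
  have hlam0 : (0 : ℝ) ≤ lam := le_trans hmu hlm
  -- compute the numerator
  have hQ00 : ((!![u, v; vt, ut] * Matrix.diagonal (fun i => ((![lam, mu] i : ℝ) : ℂ)) *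
      (!![u, v; vt, ut])ᴴ) 0 0)
      = (lam : ℂ) * (u * starRingEnd ℂ u) + (mu : ℂ) * (v * starRingEnd ℂ v) := by
    simp [Matrix.mul_apply, Fin.sum_univ_two, Matrix.conjTranspose_apply, Matrix.diagonal,
      Matrix.vecHead, Matrix.vecTail, Function.comp]
    ring
  have hNre : ((!![u, v; vt, ut] * Matrix.diagonal (fun i => ((![lam, mu] i : ℝ) : ℂ)) *
      (!![u, v; vt, ut])ᴴ) 0 0).re = lam * A + mu * B := by
    rw [hQ00, Complex.mul_conj, Complex.mul_conj]
    rw [hA, hB, Complex.sq_norm, Complex.sq_norm]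
    push_cast
    simp [← Complex.ofReal_mul, ← Complex.ofReal_add]
  -- compute the quadratic form
  have hSc : ((Matrix.vecMul ![f, g] (!![u, v; vt, ut] *
        Matrix.diagonal (fun i => ((![lam, mu] i : ℝ) : ℂ)) * (!![u, v; vt, ut])ᴴ)) ⬝ᵥ
        fun i => starRingEnd ℂ (![f, g] i))
      = (lam : ℂ) * ((f * u + g * vt) * starRingEnd ℂ (f * u + g * vt)) +
        (mu : ℂ) * ((f * v + g * ut) * starRingEnd ℂ (f * v + g * ut)) := by
    simp [Matrix.vecMul, dotProduct, Matrix.mul_apply, Fin.sum_univ_two,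
      Matrix.conjTranspose_apply, Matrix.diagonal, Matrix.vecHead, Matrix.vecTail,
      Function.comp, map_add, _root_.map_mul]
    ring
  have hSre : ((Matrix.vecMul ![f, g] (!![u, v; vt, ut] *
        Matrix.diagonal (fun i => ((![lam, mu] i : ℝ) : ℂ)) * (!![u, v; vt, ut])ᴴ)) ⬝ᵥ
        fun i => starRingEnd ℂ (![f, g] i)).re = lam * P + mu * R := by
    rw [hSc, Complex.mul_conj, Complex.mul_conj]
    rw [hP, hR, Complex.sq_norm, Complex.sq_norm]
    push_cast
    simp [← Complex.ofReal_mul, ← Complex.ofReal_add]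
  rw [hNre, hSre]
  set S := lam * P + mu * R with hS
  have hS0 : (0 : ℝ) ≤ S := by
    rw [hS]; exact add_nonneg (mul_nonneg hlam0 hP0) (mul_nonneg hmu hR0)
  have hD1 : (1 : ℝ) ≤ 1 + S := by linarith
  have hDpos : (0 : ℝ) < 1 + S := by linarith
  -- key square bounds
  have e1 : ‖f * u‖ ^ 2 = F * A := by rw [norm_mul]; rw [hF, hA]; ring
  have e2 : ‖g * vt‖ ^ 2 = G * Bt := by rw [norm_mul]; rw [hG, hBt]; ring
  have e3 : ‖f * v‖ ^ 2 = F * B := by rw [norm_mul]; rw [hF, hB]; ring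
  have e4 : ‖g * ut‖ ^ 2 = G * At := by rw [norm_mul]; rw [hG, hAt]; ring
  have T1 : F * A ≤ 2 * P + 2 * (G * Bt) := by
    have := sq_abs_le_aux (f * u) (g * vt)
    rw [e1, e2] at this; rw [hP]; exact this
  have T2 : F * B ≤ 2 * R + 2 * (G * At) := by
    have := sq_abs_le_aux (f * v) (g * ut)
    rw [e3, e4] at this; rw [hR]; exact this
  have hBt1 : Bt ≤ 1 := by linarith
  have hAt1 : At ≤ 1 := by linarith
  have hB1 : B ≤ 1 := by linarith
  -- key bound: (lam*A + mu*B) * F ≤ 4*(1+S) + 4*lam*G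
  clear_value F G A B Bt At P R S
  clear hQ00 hSc hNre hSre hU e1 e2 e3 e4 hf hF hG hA hB hBt hAt hP hR
  have key : (lam * A + mu * B) * F ≤ 4 * (1 + S) + 4 * (lam * G) := by
    have t1 := mul_le_mul_of_nonneg_left T1 hlam0
    have t2 := mul_le_mul_of_nonneg_left T2 hmu
    have t3 : lam * (G * Bt) ≤ lam * G := by
      have h := mul_le_mul_of_nonneg_left hBt1 (mul_nonneg hlam0 hG0)
      calc lam * (G * Bt) = lam * G * Bt := by ring
      _ ≤ lam * G * 1 := h
      _ = lam * G := by ring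
    have t4 : mu * (G * At) ≤ lam * G := by
      have h := mul_le_mul_of_nonneg_left hAt1 (mul_nonneg hmu hG0)
      have t5 : mu * G ≤ lam * G := mul_le_mul_of_nonneg_right hlm hG0
      calc mu * (G * At) = mu * G * At := by ring
      _ ≤ mu * G * 1 := h
      _ = mu * G := by ring
      _ ≤ lam * G := t5
    rw [hS]
    rw [hS] at hS0
    linarith [t1, t2, t3, t4, hS0]
  rw [mul_min_of_nonneg _ _ (by norm_num : (0:ℝ) ≤ 2), le_min_iff]
  constructor
  · -- first bound
    rw [div_le_iff₀ hDpos]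
    have expand : 2 * (2 / F + 2 * (G / F) * lam) * (1 + S)
        = (4 * (1 + S) + 4 * (lam * G) * (1 + S)) / F := by
      field_simp; ring
    rw [expand, le_div_iff₀ hf2]
    have h9 : 4 * (lam * G) ≤ 4 * (lam * G) * (1 + S) := by
      have := mul_nonneg (mul_nonneg hlam0 hG0) hS0
      nlinarith [this]
    linarith [key, h9]
  · -- second bound
    have hNlam : lam * A + mu * B ≤ lam := by
      rw [huv']
      have := mul_le_mul_of_nonneg_right hlm hB0
      linarith
    have hN0 : (0 : ℝ) ≤ lam * A + mu * B :=
      add_nonneg (mul_nonneg hlam0 hA0) (mul_nonneg hmu hB0)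
    calc (lam * A + mu * B) / (1 + S) ≤ lam * A + mu * B := div_le_self hN0 hD1
    _ ≤ lam := hNlam
    _ ≤ 2 * lam := by linarith
end

section
/- Bounded improvement of resource sharing (key inequality): Let λ_1,…,λ_N > 0 with Σ_i λ_i = 1, and P_1,…,P_N ≥ 0 with P_s := Σ_i λ_i P_i. Define μ_i = 1 if P_i ≤ P_s and μ_i = P_s/P_i otherwise. Then Σ_{i=1}^{N} λ_i / μ_i ≤ 2 and hence Σ_i λ_i log(1/μ_i) ≤ log 2 = 1 by concavity of log. -/
open BigOperators

lemma concaveOn_logb_two : ConcaveOn ℝ (Set.Ioi 0) (Real.logb 2) := by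
  have h := strictConcaveOn_log_Ioi.concaveOn.smul
    (c := (Real.log 2)⁻¹) (by positivity)
  convert h using 2 with x
  any_goals rfl
  simp [Real.logb, div_eq_inv_mul]

/-- Key estimate for the bounded improvement of resource sharing (Lemma 2):
`Σ λᵢ/μᵢ ≤ 2` and hence `Σ λᵢ log₂(1/μᵢ) ≤ 1`. -/
theorem stmt_18 (N : ℕ) (lam : Fin N → ℝ) (Pw : Fin N → ℝ)
    (hlam : ∀ i, 0 < lam i) (hsum : ∑ i, lam i = 1)
    (hPw : ∀ i, 0 ≤ Pw i)
    (Ps : ℝ) (hPs : Ps = ∑ i, lam i * Pw i)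
    (μ : Fin N → ℝ)
    (hμ1 : ∀ i, Pw i ≤ Ps → μ i = 1)
    (hμ2 : ∀ i, Ps < Pw i → μ i = Ps / Pw i) :
    (∑ i, lam i / μ i ≤ 2) ∧ (∑ i, lam i * Real.logb 2 (1 / μ i) ≤ 1) := by
  have hN : 0 < N := by
    by_contra h
    have : N = 0 := by omega
    subst this
    simp at hsum
  have hPsnn : 0 ≤ Ps := by
    rw [hPs]
    exact Finset.sum_nonneg fun i _ => mul_nonneg (hlam i).le (hPw i)
  rcases eq_or_lt_of_le hPsnn with hPs0 | hPspos
  · -- Ps = 0, so every Pw i = 0 and μ i = 1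
    have hall : ∀ i, μ i = 1 := by
      intro i
      apply hμ1
      by_contra h
      push_neg at h
      have h0 : ∑ i, lam i * Pw i = 0 := by rw [← hPs, ← hPs0]
      have hz := (Finset.sum_eq_zero_iff_of_nonneg
        (fun j _ => mul_nonneg (hlam j).le (hPw j))).mp h0 i (Finset.mem_univ i)
      nlinarith [hlam i, hPw i, h, hPs0]
    constructor
    · simp only [hall, div_one]; linarith
    · simp [hall]
  · -- Ps > 0
    have hμpos : ∀ i, 0 < μ i := by
      intro i
      rcases le_or_gt (Pw i) Ps with h | h
      · rw [hμ1 i h]; norm_num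
      · rw [hμ2 i h]; exact div_pos hPspos (lt_of_le_of_lt hPsnn h)
    have key : ∑ i, lam i / μ i ≤ 2 := by
      have hterm : ∀ i, lam i / μ i ≤ lam i + lam i * Pw i / Ps := by
        intro i
        rcases le_or_gt (Pw i) Ps with h | h
        · rw [hμ1 i h]
          have : 0 ≤ lam i * Pw i / Ps :=
            div_nonneg (mul_nonneg (hlam i).le (hPw i)) hPsnn
          simp; linarith
        · rw [hμ2 i h, div_div_eq_mul_div]
          linarith [hlam i]
      calc ∑ i, lam i / μ i ≤ ∑ i, (lam i + lam i * Pw i / Ps) :=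
            Finset.sum_le_sum fun i _ => hterm i
        _ = 1 + (∑ i, lam i * Pw i) / Ps := by
            rw [Finset.sum_add_distrib, hsum, ← Finset.sum_div]
        _ = 2 := by rw [← hPs, div_self hPspos.ne']; norm_num
    refine ⟨key, ?_⟩
    have hmem : ∀ i ∈ Finset.univ, (1 / μ i) ∈ Set.Ioi (0:ℝ) := by
      intro i _
      have := hμpos i
      exact Set.mem_Ioi.mpr (by positivity)
    have jensen := concaveOn_logb_two.le_map_sum
      (t := Finset.univ) (w := lam) (p := fun i => 1 / μ i)
      (fun i _ => (hlam i).le) hsum hmem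
    simp only [smul_eq_mul] at jensen
    refine le_trans jensen ?_
    have hpos : 0 < ∑ i, lam i * (1 / μ i) := by
      apply Finset.sum_pos
      · intro i _
        have := hlam i; have := hμpos i; positivity
      · haveI : Nonempty (Fin N) := Fin.pos_iff_nonempty.mp hN
        exact Finset.univ_nonempty
    have hle : ∑ i, lam i * (1 / μ i) ≤ 2 := by
      refine le_trans (le_of_eq ?_) key
      congr 1; ext i; rw [mul_one_div]
    calc Real.logb 2 (∑ i, lam i * (1 / μ i)) ≤ Real.logb 2 2 :=
          (Real.logb_le_logb one_lt_two hpos two_pos).mpr hle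
      _ = 1 := Real.logb_self_eq_one one_lt_two
end
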